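/- Let GeLU(x) = x·Φ(x) with Φ the standard normal cumulative distribution function, and let ReLU(x) = max(x, 0), both applied entrywise to vectors. Let W₁ be a real h × d₁ matrix and W₂ a real d₂ × h matrix, and let g : ℝ^{d₁} → ℝ^{d₂} be the two-layer ReLU network g(x) = W₂ · ReLU(W₁ · x). Then for every ε ∈ (0,1) there exists λ > 0 such that the two-layer GeLU network f(x) = (1/λ)·W₂ · GeLU(λ·W₁ · x) satisfies ‖f(x) − g(x)‖₂ ≤ ε for every x ∈ ℝ^{d₁}. -/

import Mathlib

open MeasureTheory Real Set Filter

noncomputable def stdNormalCDF (x : ℝ) : ℝ :=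
  (1 / Real.sqrt (2 * Real.pi)) * ∫ t in Set.Iic x, Real.exp (-(t ^ 2) / 2)

noncomputable def gelu (x : ℝ) : ℝ := x * stdNormalCDF x

def relu (x : ℝ) : ℝ := max x 0

lemma gauss_integrable : Integrable (fun t : ℝ => Real.exp (-(t ^ 2) / 2)) := by
  have := integrable_exp_neg_mul_sq (by norm_num : (0:ℝ) < 1/2)
  convert this using 2 with t
  ring_nf

lemma gauss_deriv (u : ℝ) :
    HasDerivAt (fun t : ℝ => Real.exp (-(t ^ 2) / 2)) (-u * Real.exp (-(u ^ 2) / 2)) u := by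
  have h1 : HasDerivAt (fun t : ℝ => -(t ^ 2) / 2) (-u) u := by
    have := ((hasDerivAt_pow 2 u).neg).div_const 2
    simpa using this.congr_deriv (by ring)
  simpa [mul_comm] using h1.exp

lemma neg_half_sq_tendsto (l : Filter ℝ) (h1 : Tendsto (fun t : ℝ => t ^ 2) l atTop) :
    Tendsto (fun t : ℝ => Real.exp (-(t ^ 2) / 2)) l (nhds 0) := by
  apply Real.tendsto_exp_atBot.comp
  have h2 : Tendsto (fun s : ℝ => -s / 2) atTop atBot := by
    have h3 : Tendsto (fun s : ℝ => -s) atTop atBot := tendsto_neg_atTop_atBot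
    exact h3.atBot_div_const (by norm_num)
  exact h2.comp h1

lemma gauss_tendsto_bot :
    Tendsto (fun t : ℝ => Real.exp (-(t ^ 2) / 2)) atBot (nhds 0) := by
  apply neg_half_sq_tendsto
  have h : Tendsto (fun t : ℝ => t * t) atBot atTop := tendsto_id.atBot_mul_atBot₀ tendsto_id
  refine h.congr fun t => (sq t).symm

lemma gauss_tendsto_top :
    Tendsto (fun t : ℝ => Real.exp (-(t ^ 2) / 2)) atTop (nhds 0) := by
  exact neg_half_sq_tendsto _ (tendsto_pow_atTop two_ne_zero)

lemma negxgauss_integrable : Integrable (fun t : ℝ => -t * Real.exp (-(t ^ 2) / 2)) := by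
  have := integrable_mul_exp_neg_mul_sq (by norm_num : (0:ℝ) < 1/2)
  have h2 := this.neg
  apply h2.congr
  filter_upwards with x
  simp only [Pi.neg_apply]
  ring_nf

lemma xgauss_integrable : Integrable (fun t : ℝ => t * Real.exp (-(t ^ 2) / 2)) := by
  have := integrable_mul_exp_neg_mul_sq (by norm_num : (0:ℝ) < 1/2)
  convert this using 2 with t
  ring_nf

lemma integral_Iic_xgauss (t : ℝ) :
    ∫ u in Iic t, -u * Real.exp (-(u ^ 2) / 2) = Real.exp (-(t ^ 2) / 2) := by
  have := integral_Iic_of_hasDerivAt_of_tendsto'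
    (f := fun u : ℝ => Real.exp (-(u ^ 2) / 2))
    (f' := fun u : ℝ => -u * Real.exp (-(u ^ 2) / 2)) (a := t) (m := 0)
    (fun x _ => gauss_deriv x) negxgauss_integrable.integrableOn gauss_tendsto_bot
  simpa using this

lemma integral_Ioi_xgauss (t : ℝ) :
    ∫ u in Ioi t, u * Real.exp (-(u ^ 2) / 2) = Real.exp (-(t ^ 2) / 2) := by
  have := integral_Ioi_of_hasDerivAt_of_tendsto'
    (f := fun u : ℝ => -Real.exp (-(u ^ 2) / 2))
    (f' := fun u : ℝ => u * Real.exp (-(u ^ 2) / 2)) (a := t) (m := 0)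
    (fun x _ => by simpa using (gauss_deriv x).fun_neg)
    (xgauss_integrable.integrableOn) (by simpa using gauss_tendsto_top.neg)
  simpa using this

lemma total_integral : ∫ t : ℝ, Real.exp (-(t ^ 2) / 2) = Real.sqrt (2 * Real.pi) := by
  have := integral_gaussian (1/2)
  rw [show π / (1/2) = 2 * π by ring] at this
  rw [← this]
  congr 1 with t
  ring_nf

lemma cdf_nonneg (t : ℝ) : 0 ≤ stdNormalCDF t := by
  apply mul_nonneg
  · positivity
  · exact integral_nonneg fun u => (Real.exp_pos _).le

lemma key_bound (t : ℝ) : |gelu t - relu t| ≤ 1 / Real.sqrt (2 * Real.pi) := by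
  set B : ℝ := 1 / Real.sqrt (2 * Real.pi) with hB
  have hBpos : 0 < B := by
    rw [hB]; positivity
  rcases lt_trichotomy t 0 with ht | rfl | ht
  · -- t < 0
    have hrelu : relu t = 0 := max_eq_right ht.le
    have htail : ∫ u in Iic t, Real.exp (-(u ^ 2) / 2) ≤ Real.exp (-(t ^ 2) / 2) / (-t) := by
      calc ∫ u in Iic t, Real.exp (-(u ^ 2) / 2)
          ≤ ∫ u in Iic t, (-t)⁻¹ * (-u * Real.exp (-(u ^ 2) / 2)) := by
            apply setIntegral_mono_on gauss_integrable.integrableOn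
              (negxgauss_integrable.integrableOn.const_mul _) measurableSet_Iic
            intro u hu
            rw [← mul_assoc]
            have h1 : (1 : ℝ) ≤ (-t)⁻¹ * -u := by
              rw [inv_mul_eq_div, le_div_iff₀ (by linarith)]
              simp only [Iic, mem_setOf_eq] at hu
              linarith
            nlinarith [Real.exp_pos (-(u^2)/2)]
        _ = (-t)⁻¹ * ∫ u in Iic t, -u * Real.exp (-(u ^ 2) / 2) := integral_const_mul _ _
        _ = Real.exp (-(t ^ 2) / 2) / (-t) := by rw [integral_Iic_xgauss t, inv_mul_eq_div]
    have : |gelu t - relu t| = (-t) * stdNormalCDF t := by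
      rw [hrelu, sub_zero, gelu, abs_mul, abs_of_neg ht,
        abs_of_nonneg (cdf_nonneg t)]
    rw [this, stdNormalCDF, ← hB]
    calc (-t) * (B * ∫ u in Iic t, Real.exp (-(u ^ 2) / 2))
        ≤ (-t) * (B * (Real.exp (-(t ^ 2) / 2) / (-t))) := by
          apply mul_le_mul_of_nonneg_left _ (by linarith)
          exact mul_le_mul_of_nonneg_left htail hBpos.le
      _ = B * Real.exp (-(t ^ 2) / 2) := by
          have ht0 : t ≠ 0 := by intro h; simp [h] at ht
          field_simp
      _ ≤ B * 1 := by
          apply mul_le_mul_of_nonneg_left _ hBpos.le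
          exact Real.exp_le_one_iff.mpr (by nlinarith [sq_nonneg t])
      _ = B := mul_one B
  · -- t = 0
    have h0 : gelu 0 - relu 0 = 0 := by simp [gelu, relu]
    rw [h0, abs_zero]
    exact hBpos.le
  · -- t > 0
    have hrelu : relu t = t := max_eq_left ht.le
    have hsplit : stdNormalCDF t - 1 = -(B * ∫ u in Ioi t, Real.exp (-(u ^ 2) / 2)) := by
      have hadd := intervalIntegral.integral_Iic_add_Ioi (f := fun u : ℝ => Real.exp (-(u ^ 2) / 2))
        (μ := volume) (b := t) gauss_integrable.integrableOn gauss_integrable.integrableOn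
      rw [total_integral] at hadd
      have hs : Real.sqrt (2 * Real.pi) ≠ 0 := by positivity
      rw [stdNormalCDF, ← hB]
      have : B * Real.sqrt (2 * Real.pi) = 1 := by
        rw [hB]; field_simp
      nlinarith [hadd]
    have htail : ∫ u in Ioi t, Real.exp (-(u ^ 2) / 2) ≤ Real.exp (-(t ^ 2) / 2) / t := by
      calc ∫ u in Ioi t, Real.exp (-(u ^ 2) / 2)
          ≤ ∫ u in Ioi t, t⁻¹ * (u * Real.exp (-(u ^ 2) / 2)) := by
            apply setIntegral_mono_on gauss_integrable.integrableOn
              (xgauss_integrable.integrableOn.const_mul _) measurableSet_Ioi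
            intro u hu
            rw [← mul_assoc]
            have h1 : (1 : ℝ) ≤ t⁻¹ * u := by
              rw [inv_mul_eq_div, le_div_iff₀ ht]
              simp only [Ioi, mem_setOf_eq] at hu
              linarith
            nlinarith [Real.exp_pos (-(u^2)/2)]
        _ = t⁻¹ * ∫ u in Ioi t, u * Real.exp (-(u ^ 2) / 2) := integral_const_mul _ _
        _ = Real.exp (-(t ^ 2) / 2) / t := by rw [integral_Ioi_xgauss t, inv_mul_eq_div]
    have htnn : 0 ≤ ∫ u in Ioi t, Real.exp (-(u ^ 2) / 2) :=
      integral_nonneg fun u => (Real.exp_pos _).le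
    have : |gelu t - relu t| = t * (B * ∫ u in Ioi t, Real.exp (-(u ^ 2) / 2)) := by
      rw [hrelu, gelu, show t * stdNormalCDF t - t = t * (stdNormalCDF t - 1) by ring,
        hsplit, abs_mul, abs_of_pos ht, abs_neg, abs_of_nonneg (by positivity)]
    rw [this]
    calc t * (B * ∫ u in Ioi t, Real.exp (-(u ^ 2) / 2))
        ≤ t * (B * (Real.exp (-(t ^ 2) / 2) / t)) := by
          apply mul_le_mul_of_nonneg_left _ ht.le
          exact mul_le_mul_of_nonneg_left htail hBpos.le
      _ = B * Real.exp (-(t ^ 2) / 2) := by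
          have ht0 : t ≠ 0 := by intro h; simp [h] at ht
          field_simp
      _ ≤ B * 1 := by
          apply mul_le_mul_of_nonneg_left _ hBpos.le
          exact Real.exp_le_one_iff.mpr (by nlinarith [sq_nonneg t])
      _ = B := mul_one B

lemma scaled_bound (lam y : ℝ) (hlam : 0 < lam) :
    |(1 / lam) * gelu (lam * y) - relu y| ≤ (1 / Real.sqrt (2 * Real.pi)) / lam := by
  have h1 : relu (lam * y) = lam * relu y := by
    rw [relu, relu, mul_max_of_nonneg _ _ hlam.le, mul_zero]
  have h2 : (1 / lam) * gelu (lam * y) - relu y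
      = (1 / lam) * (gelu (lam * y) - relu (lam * y)) := by
    rw [h1]; field_simp
  rw [h2, abs_mul, abs_of_pos (by positivity : (0:ℝ) < 1 / lam)]
  calc (1 / lam) * |gelu (lam * y) - relu (lam * y)|
      ≤ (1 / lam) * (1 / Real.sqrt (2 * Real.pi)) :=
        mul_le_mul_of_nonneg_left (key_bound _) (by positivity)
    _ = (1 / Real.sqrt (2 * Real.pi)) / lam := by ring

/-- For a two-layer ReLU network `g(x) = W₂·ReLU(W₁·x)` and every `ε ∈ (0,1)`, there
exists `λ > 0` such that the two-layer GeLU network `f(x) = (1/λ)·W₂·GeLU(λ·W₁·x)`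
satisfies `‖f(x) − g(x)‖₂ ≤ ε` for every `x ∈ ℝ^{d₁}`. -/
theorem gelu_network_approx_relu_network (d₁ h d₂ : ℕ)
    (W₁ : Matrix (Fin h) (Fin d₁) ℝ) (W₂ : Matrix (Fin d₂) (Fin h) ℝ)
    (ε : ℝ) (hε : ε ∈ Set.Ioo (0 : ℝ) 1) :
    ∃ lam > (0 : ℝ), ∀ x : Fin d₁ → ℝ,
      Real.sqrt (∑ i : Fin d₂,
          ((1 / lam) * W₂.mulVec (fun j => gelu (lam * W₁.mulVec x j)) i
            - W₂.mulVec (fun j => relu (W₁.mulVec x j)) i) ^ 2) ≤ ε := by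
  obtain ⟨hε0, _⟩ := hε
  set B : ℝ := 1 / Real.sqrt (2 * Real.pi) with hBdef
  have hBpos : 0 < B := by rw [hBdef]; positivity
  set T : ℝ := ∑ i : Fin d₂, (∑ j : Fin h, |W₂ i j|) ^ 2 with hTdef
  have hT : 0 ≤ T := Finset.sum_nonneg fun i _ => sq_nonneg _
  set lam : ℝ := 1 + B * Real.sqrt T / ε with hlamdef
  have hlampos : 0 < lam := by positivity
  refine ⟨lam, hlampos, fun x => ?_⟩
  set y : Fin h → ℝ := W₁.mulVec x with hy
  have hcomp : ∀ i : Fin d₂,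
      |(1 / lam) * W₂.mulVec (fun j => gelu (lam * y j)) i
        - W₂.mulVec (fun j => relu (y j)) i| ≤ (B / lam) * ∑ j : Fin h, |W₂ i j| := by
    intro i
    have heq : (1 / lam) * W₂.mulVec (fun j => gelu (lam * y j)) i
        - W₂.mulVec (fun j => relu (y j)) i
        = ∑ j : Fin h, W₂ i j * ((1 / lam) * gelu (lam * y j) - relu (y j)) := by
      simp only [Matrix.mulVec, dotProduct, Finset.mul_sum, ← Finset.sum_sub_distrib]
      exact Finset.sum_congr rfl fun j _ => by ring
    rw [heq, Finset.mul_sum]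
    refine le_trans (Finset.abs_sum_le_sum_abs _ _) (Finset.sum_le_sum fun j _ => ?_)
    rw [abs_mul, mul_comm (B / lam)]
    exact mul_le_mul_of_nonneg_left (scaled_bound lam (y j) hlampos) (abs_nonneg _)
  have hsum : ∑ i : Fin d₂,
      ((1 / lam) * W₂.mulVec (fun j => gelu (lam * y j)) i
        - W₂.mulVec (fun j => relu (y j)) i) ^ 2 ≤ (B / lam) ^ 2 * T := by
    rw [hTdef, Finset.mul_sum]
    refine Finset.sum_le_sum fun i _ => ?_
    rw [← sq_abs, ← mul_pow]
    exact pow_le_pow_left₀ (abs_nonneg _) (hcomp i) 2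
  refine le_trans (Real.sqrt_le_sqrt hsum) ?_
  rw [Real.sqrt_mul (sq_nonneg _), Real.sqrt_sq (by positivity : (0:ℝ) ≤ B / lam)]
  rw [div_mul_eq_mul_div, div_le_iff₀ hlampos]
  have : ε * lam = ε + B * Real.sqrt T := by
    rw [hlamdef]; field_simp
  nlinarith [Real.sqrt_nonneg T]
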